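/- For every vertex v of T and every integer k with 1 ≤ k < height of T, let R be the highest vertex of the decomposition D that contains v and has height at most k (such R exists and is unique on the path of D from its root to the leaf {v}). Then the height of R is at least max(⌊ε(k+1)⌋, 1). -/

import Mathlib

namespace VEB

inductive OTree : Type where
  | node : List OTree → OTree

def OTree.children : OTree → List OTree
  | .node cs => cs

mutual
  def height : OTree → ℕ
    | .node cs => 1 + heightList cs
  def heightList : List OTree → ℕ
    | [] => 0
    | c :: cs => max (height c) (heightList cs)
end

def subtreeAt? : OTree → List ℕ → Option OTree
  | t, [] => some t
  | t, i :: p =>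
    match t.children[i]? with
    | some c => subtreeAt? c p
    | none => none

/-- `p` is (the path of) a vertex of `t`. -/
def IsVertex (t : OTree) (p : List ℕ) : Prop := (subtreeAt? t p).isSome

/-- `p` is a leaf of `t`. -/
def IsLeaf (t : OTree) (p : List ℕ) : Prop := subtreeAt? t p = some (.node [])

/-- All leaves of `t` are at the same depth (the bottom level). -/
def Uniform (t : OTree) : Prop := ∀ p, IsLeaf t p → p.length + 1 = height t

/-- The top `m+1` levels of `t` (the truncation of height `m+1`). -/
def trunc : ℕ → OTree → OTree
  | 0, _ => .node []
  | m+1, t => .node (t.children.map (trunc m))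

/-- Paths of the vertices at depth `m`, in left-to-right order. -/
def levelPaths : ℕ → OTree → List (List ℕ)
  | 0, _ => [[]]
  | m+1, t => (t.children.zipIdx.map fun ic => (levelPaths m ic.1).map (ic.2 :: ·)).flatten

/-- The level at which a tree of height `h` is cut: `max ⌊ε h⌋ 1`. -/
noncomputable def cutLevel (ε : ℝ) (h : ℕ) : ℕ := max ⌊ε * (h : ℝ)⌋₊ 1

/-- The van Emde Boas order of the vertex paths of `t` (with recursion fuel). -/
noncomputable def vEBAux (ε : ℝ) : ℕ → OTree → List (List ℕ)
  | 0, _ => []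
  | fuel+1, t =>
    if height t ≤ 1 then [[]]
    else
      let m := cutLevel ε (height t)
      vEBAux ε fuel (trunc (m - 1) t) ++
        ((levelPaths m t).map fun q =>
          match subtreeAt? t q with
          | some s => (vEBAux ε fuel s).map (q ++ ·)
          | none => []).flatten

/-- The van Emde Boas order `vEB_ε(t)` of the vertex paths of `t`. -/
noncomputable def vEB (ε : ℝ) (t : OTree) : List (List ℕ) := vEBAux ε (height t) t

/-- Position (index) of vertex `p` in the van Emde Boas order. -/
noncomputable def pos (ε : ℝ) (t : OTree) (p : List ℕ) : ℕ := (vEB ε t).idxOf p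

/-- `A` is a set of vertices occupying consecutive positions in `vEB_ε(t)`. -/
def MemInterval (ε : ℝ) (t : OTree) (A : Set (List ℕ)) : Prop :=
  ∃ i n, A = {p | p ∈ ((vEB ε t).drop i).take n}

/-- The vertices of the decomposition `D` of `t`: pairs `(p, k)` of the root path
and the height of a decomposition subtree (with recursion fuel). -/
noncomputable def decompAux (ε : ℝ) : ℕ → OTree → List (List ℕ × ℕ)
  | 0, _ => []
  | fuel+1, t =>
    if height t ≤ 1 then [([], 1)]
    else
      let m := cutLevel ε (height t)
      ([], height t) ::
        (decompAux ε fuel (trunc (m - 1) t) ++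
          ((levelPaths m t).map fun q =>
            match subtreeAt? t q with
            | some s => (decompAux ε fuel s).map fun r => (q ++ r.1, r.2)
            | none => []).flatten)

/-- The vertices of the decomposition `D` of `t`. -/
noncomputable def decompVerts (ε : ℝ) (t : OTree) : List (List ℕ × ℕ) :=
  decompAux ε (height t) t

/-- The children in the decomposition tree `D` of the decomposition vertex `(p, k)`:
the top tree followed by the bottom trees in left-to-right order. -/
noncomputable def dChildren (ε : ℝ) (t : OTree) (p : List ℕ) (k : ℕ) : List (List ℕ × ℕ) :=
  if k ≤ 1 then []
  else
    match subtreeAt? t p with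
    | some s =>
      (p, cutLevel ε k) ::
        (levelPaths (cutLevel ε k) s).map fun q => (p ++ q, k - cutLevel ε k)
    | none => []

/-- The decomposition subtree `(p, k)` contains the vertex `w` of `t`;
equivalently, the leaf `{w}` of `D` lies in the subtree of `D` rooted at `(p, k)`. -/
def DContains (p : List ℕ) (k : ℕ) (w : List ℕ) : Prop :=
  p <+: w ∧ w.length < p.length + k

/-- Vertex `v` is to the left of the branch with leaf `ℓ`. -/
def LeftOfBranch (v ℓ : List ℕ) : Prop := List.Lex (· < ·) v (ℓ.take v.length)

/-- Vertex `v` is to the right of the branch with leaf `ℓ`. -/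
def RightOfBranch (v ℓ : List ℕ) : Prop := List.Lex (· < ·) (ℓ.take v.length) v

/-- Every internal vertex of `t` has at least `a` children. -/
def MinArity (t : OTree) (a : ℕ) : Prop :=
  ∀ p s, subtreeAt? t p = some s → s.children ≠ [] → a ≤ s.children.length

/-- Every internal vertex of `t` has at most `b` children. -/
def MaxArity (t : OTree) (b : ℕ) : Prop :=
  ∀ p s, subtreeAt? t p = some s → s.children.length ≤ b

/-- `w` lies on the leftmost branch descending from `v` (always taking the leftmost child). -/
def OnLeftmostBranch (v w : List ℕ) : Prop :=
  v <+: w ∧ ∀ n (hn : n < w.length), v.length ≤ n → w.get ⟨n, hn⟩ = 0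

/-- `w` lies on the rightmost branch descending from `v` (always taking the rightmost child). -/
def OnRightmostBranch (t : OTree) (v w : List ℕ) : Prop :=
  v <+: w ∧ ∀ n (hn : n < w.length), v.length ≤ n →
    ∀ s, subtreeAt? t (w.take n) = some s → w.get ⟨n, hn⟩ + 1 = s.children.length

section Lemmas

lemma height_pos (t : OTree) : 1 ≤ height t := by
  cases t with
  | node cs => rw [height]; omega

lemma height_le_heightList {c : OTree} {cs : List OTree} (h : c ∈ cs) :
    height c ≤ heightList cs := by
  induction cs with
  | nil => simp at h
  | cons d ds ih =>
    rw [heightList]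
    rcases List.mem_cons.1 h with h | h
    · subst h; exact le_max_left _ _
    · exact le_trans (ih h) (le_max_right _ _)

lemma subtreeAt?_cons (cs : List OTree) (i : ℕ) (p : List ℕ) :
    subtreeAt? (.node cs) (i :: p) =
      match cs[i]? with
      | some c => subtreeAt? c p
      | none => none := rfl

lemma depth_add_height_le {q : List ℕ} {t s : OTree}
    (h : subtreeAt? t q = some s) : q.length + height s ≤ height t := by
  induction q generalizing t with
  | nil => simp [subtreeAt?] at h; subst h; simp
  | cons i p ih =>
    cases t with
    | node cs =>
      rw [subtreeAt?_cons] at h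
      cases hc : cs[i]? with
      | none => rw [hc] at h; simp at h
      | some c =>
        rw [hc] at h
        have hm : c ∈ cs := List.mem_of_getElem? hc
        have := ih h
        have h2 := height_le_heightList hm
        rw [height]
        simp only [List.length_cons]
        omega

lemma depth_lt_height {q : List ℕ} {t : OTree} (h : IsVertex t q) :
    q.length < height t := by
  rw [IsVertex, Option.isSome_iff_exists] at h
  obtain ⟨s, hs⟩ := h
  have := depth_add_height_le hs
  have := height_pos s
  omega

lemma subtreeAt?_append (q p : List ℕ) (t : OTree) :
    subtreeAt? t (q ++ p) = (subtreeAt? t q).bind (fun s => subtreeAt? s p) := by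
  induction q generalizing t with
  | nil => simp [subtreeAt?]
  | cons i q' ih =>
    cases t with
    | node cs =>
      rw [List.cons_append, subtreeAt?_cons, subtreeAt?_cons]
      cases hc : cs[i]? with
      | none => simp
      | some c => simpa using ih c

lemma heightList_attained {cs : List OTree} (h : cs ≠ []) :
    ∃ c ∈ cs, heightList cs = height c := by
  induction cs with
  | nil => simp at h
  | cons d ds ih =>
    rcases eq_or_ne ds [] with h' | h'
    · subst h'; exact ⟨d, by simp, by rw [heightList, heightList]; omega⟩
    · obtain ⟨c, hc, hch⟩ := ih h'
      rw [heightList]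
      rcases le_total (height d) (heightList ds) with hle | hle
      · exact ⟨c, by simp [hc], by omega⟩
      · exact ⟨d, by simp, by omega⟩

lemma exists_deep_leaf (t : OTree) : ∃ p, IsLeaf t p ∧ p.length + 1 = height t := by
  obtain ⟨n, hn⟩ : ∃ n, height t ≤ n := ⟨height t, le_rfl⟩
  induction n generalizing t with
  | zero => have := height_pos t; omega
  | succ n ih =>
    cases t with
    | node cs =>
      rcases eq_or_ne cs [] with h | h
      · subst h; exact ⟨[], rfl, by rw [height, heightList]; simp⟩
      · obtain ⟨c, hc, hch⟩ := heightList_attained h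
        have hht : height (OTree.node cs) = 1 + height c := by rw [height, hch]
        obtain ⟨i, hi⟩ := List.getElem?_of_mem hc
        obtain ⟨p, hp, hpl⟩ := ih c (by rw [hht] at hn; omega)
        refine ⟨i :: p, ?_, by simp [hht]; omega⟩
        rw [IsLeaf, subtreeAt?_cons, hi]; exact hp

end Lemmas
lemma isLeaf_append {t s : OTree} {q p : List ℕ} (hs : subtreeAt? t q = some s)
    (hp : IsLeaf s p) : IsLeaf t (q ++ p) := by
  rw [IsLeaf, subtreeAt?_append, hs]; exact hp

lemma height_subtree_of_uniform {t s : OTree} {q : List ℕ} (ht : Uniform t)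
    (hs : subtreeAt? t q = some s) : q.length + height s = height t := by
  obtain ⟨p, hp, hpl⟩ := exists_deep_leaf s
  have := ht (q ++ p) (isLeaf_append hs hp)
  simp only [List.length_append] at this
  omega

lemma uniform_subtree {t s : OTree} {q : List ℕ} (ht : Uniform t)
    (hs : subtreeAt? t q = some s) : Uniform s := by
  intro p hp
  have h1 := ht (q ++ p) (isLeaf_append hs hp)
  have h2 := height_subtree_of_uniform ht hs
  simp only [List.length_append] at h1
  omega

lemma height_trunc : ∀ (j : ℕ) (t : OTree), height (trunc j t) = min (j + 1) (height t) := by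
  intro j
  induction j with
  | zero =>
    intro t
    rw [trunc, height, heightList]
    have := height_pos t; omega
  | succ j ih =>
    intro t
    cases t with
    | node cs =>
      rw [trunc, height, height]
      simp only [OTree.children]
      have : heightList (cs.map (trunc j)) = min (j + 1) (heightList cs) := by
        induction cs with
        | nil => simp [heightList]
        | cons d ds ihl =>
          rw [List.map_cons, heightList, heightList, ihl, ih d]
          omega
      rw [this]; omega

lemma subtreeAt?_trunc : ∀ (p : List ℕ) (j : ℕ) (t : OTree), p.length ≤ j →
    subtreeAt? (trunc j t) p = (subtreeAt? t p).map (trunc (j - p.length)) := by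
  intro p
  induction p with
  | nil => intro j t _; simp [subtreeAt?]
  | cons i p' ih =>
    intro j t hlen
    simp only [List.length_cons] at hlen
    obtain ⟨j', rfl⟩ : ∃ j', j = j' + 1 := ⟨j - 1, by omega⟩
    cases t with
    | node cs =>
      rw [trunc, subtreeAt?_cons, subtreeAt?_cons]
      simp only [OTree.children, List.getElem?_map]
      cases hc : cs[i]? with
      | none => simp
      | some c =>
        simp only [Option.map_some]
        rw [ih j' c (by omega)]
        simp only [List.length_cons, Nat.succ_sub_succ]

lemma isVertex_trunc {t : OTree} {v : List ℕ} {j : ℕ} (hv : IsVertex t v)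
    (hlen : v.length ≤ j) : IsVertex (trunc j t) v := by
  obtain ⟨s, hs⟩ := Option.isSome_iff_exists.mp hv
  rw [IsVertex, subtreeAt?_trunc v j t hlen, hs]
  rfl

lemma uniform_trunc {t : OTree} {j : ℕ} (ht : Uniform t) (hj : j + 1 ≤ height t) :
    Uniform (trunc j t) := by
  intro p hp
  have hv : IsVertex (trunc j t) p := by rw [IsVertex, hp]; rfl
  have hlt := depth_lt_height hv
  rw [height_trunc] at hlt
  have hlen : p.length ≤ j := by omega
  rw [IsLeaf, subtreeAt?_trunc p j t hlen] at hp
  obtain ⟨s, hs, hts⟩ := Option.map_eq_some_iff.mp hp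
  rw [height_trunc]
  rcases Nat.eq_zero_or_pos (j - p.length) with h0 | h0
  · omega
  · exfalso
    obtain ⟨d, hd⟩ : ∃ d, j - p.length = d + 1 := ⟨j - p.length - 1, by omega⟩
    rw [hd, trunc] at hts
    cases s with
    | node cs' =>
      simp only [OTree.node.injEq, List.map_eq_nil_iff, OTree.children] at hts
      subst hts
      have := ht p hs
      omega

lemma mem_levelPaths : ∀ (q : List ℕ) (t : OTree), IsVertex t q →
    q ∈ levelPaths q.length t := by
  intro q
  induction q with
  | nil => intro t _; simp [levelPaths]
  | cons i q' ih =>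
    intro t hv
    cases t with
    | node cs =>
      rw [IsVertex, subtreeAt?_cons] at hv
      cases hc : cs[i]? with
      | none => rw [hc] at hv; simp at hv
      | some c =>
        rw [hc] at hv
        simp only [List.length_cons]
        rw [levelPaths]
        rw [List.mem_flatten]
        refine ⟨(levelPaths q'.length c).map (i :: ·), ?_, ?_⟩
        · simp only [List.mem_map]
          refine ⟨(c, i), ?_, rfl⟩
          simp only [OTree.children]
          rw [List.mem_zipIdx_iff_getElem?]
          exact hc
        · exact List.mem_map.mpr ⟨q', ih c hv, rfl⟩

lemma root_mem_decompAux (ε : ℝ) (f : ℕ) (t : OTree) :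
    ([], height t) ∈ decompAux ε (f + 1) t := by
  rw [decompAux]
  split
  · rename_i h
    have := height_pos t
    have : height t = 1 := by omega
    simp [this]
  · simp
lemma two_mul_cutLevel_le {ε : ℝ} (hε0 : 0 ≤ ε) (hε1 : ε ≤ 1/2) {h : ℕ} (hh : 2 ≤ h) :
    2 * cutLevel ε h ≤ h := by
  rw [cutLevel]
  have h1 : (⌊ε * h⌋₊ : ℝ) ≤ ε * h := Nat.floor_le (by positivity)
  have h2 : ε * h ≤ (h : ℝ) / 2 := by nlinarith [Nat.cast_nonneg (α := ℝ) h]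
  have h3 : 2 * ⌊ε * (h:ℝ)⌋₊ ≤ h := by
    have : ((2 * ⌊ε * (h:ℝ)⌋₊ : ℕ) : ℝ) ≤ (h : ℝ) := by push_cast; linarith
    exact_mod_cast this
  omega

lemma target_le_cutLevel {ε : ℝ} (hε0 : 0 ≤ ε) {k h : ℕ} (hkh : k + 1 ≤ h) :
    max ⌊ε * ((k : ℝ) + 1)⌋₊ 1 ≤ cutLevel ε h := by
  rw [cutLevel]
  have hcast : ((k : ℝ) + 1) ≤ (h : ℝ) := by exact_mod_cast hkh
  exact max_le_max (Nat.floor_le_floor (mul_le_mul_of_nonneg_left hcast hε0)) le_rfl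

lemma mem_decompAux_top {ε : ℝ} {f : ℕ} {t : OTree} (hh : 2 ≤ height t)
    {x : List ℕ × ℕ} (hx : x ∈ decompAux ε f (trunc (cutLevel ε (height t) - 1) t)) :
    x ∈ decompAux ε (f + 1) t := by
  rw [decompAux, if_neg (by omega)]
  exact List.mem_cons_of_mem _ (List.mem_append_left _ hx)

lemma mem_decompAux_bot {ε : ℝ} {f : ℕ} {t s : OTree} (hh : 2 ≤ height t)
    {q : List ℕ} (hq : q ∈ levelPaths (cutLevel ε (height t)) t)
    (hs : subtreeAt? t q = some s) {r : List ℕ × ℕ} (hr : r ∈ decompAux ε f s) :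
    (q ++ r.1, r.2) ∈ decompAux ε (f + 1) t := by
  rw [decompAux, if_neg (by omega)]
  refine List.mem_cons_of_mem _ (List.mem_append_right _ ?_)
  rw [List.mem_flatten]
  refine ⟨_, List.mem_map.mpr ⟨q, hq, rfl⟩, ?_⟩
  rw [hs]
  exact List.mem_map.mpr ⟨r, hr, rfl⟩

lemma exists_good (ε : ℝ) (hε0 : 0 < ε) (hε1 : ε ≤ 1/2) :
    ∀ (fuel : ℕ) (t : OTree) (v : List ℕ) (k : ℕ), Uniform t → IsVertex t v →
      1 ≤ k → k < height t → height t ≤ fuel →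
      ∃ q m', (q, m') ∈ decompAux ε fuel t ∧ DContains q m' v ∧
        max ⌊ε * ((k : ℝ) + 1)⌋₊ 1 ≤ m' ∧ m' ≤ k := by
  intro fuel
  induction fuel with
  | zero => intro t v k _ _ _ hk2 hf; have := height_pos t; omega
  | succ f ih =>
    intro t v k ht hv hk1 hk2 hf
    have hh2 : 2 ≤ height t := by omega
    have hc1 : 1 ≤ cutLevel ε (height t) := le_max_right _ _
    have hc2 : 2 * cutLevel ε (height t) ≤ height t := two_mul_cutLevel_le hε0.le hε1 hh2
    set c := cutLevel ε (height t) with hc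
    have hch : c < height t := by omega
    have htc : max ⌊ε * ((k : ℝ) + 1)⌋₊ 1 ≤ c := target_le_cutLevel hε0.le (by omega)
    have hf1 : height t - 1 ≤ f := by omega
    rcases lt_or_ge v.length c with hvc | hvc
    · -- v is in the top tree
      have ht0u : Uniform (trunc (c - 1) t) := uniform_trunc ht (by omega)
      have ht0h : height (trunc (c - 1) t) = c := by rw [height_trunc]; omega
      have hv0 : IsVertex (trunc (c - 1) t) v := isVertex_trunc hv (by omega)
      rcases le_or_gt c k with hck | hck
      · obtain ⟨f', rfl⟩ : ∃ f', f = f' + 1 := ⟨f - 1, by omega⟩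
        refine ⟨[], c, ?_, ⟨List.nil_prefix, by simpa using hvc⟩, htc, hck⟩
        apply mem_decompAux_top hh2
        have := root_mem_decompAux ε f' (trunc (c - 1) t)
        rwa [ht0h] at this
      · obtain ⟨q, m', hmem, hdc, hb1, hb2⟩ :=
          ih (trunc (c - 1) t) v k ht0u hv0 hk1 (by omega) (by omega)
        exact ⟨q, m', mem_decompAux_top hh2 hmem, hdc, hb1, hb2⟩
    · -- v is in a bottom tree
      have hvh : v.length < height t := depth_lt_height hv
      have hqlen : (v.take c).length = c := by rw [List.length_take]; omega
      obtain ⟨sv, hsv⟩ := Option.isSome_iff_exists.mp hv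
      have hsplit : (subtreeAt? t (v.take c)).bind (fun s => subtreeAt? s (v.drop c))
          = some sv := by
        rw [← subtreeAt?_append, List.take_append_drop]; exact hsv
      cases hqs : subtreeAt? t (v.take c) with
      | none => rw [hqs] at hsplit; simp at hsplit
      | some s =>
        rw [hqs] at hsplit
        simp only [Option.bind_some] at hsplit
        have hvs : IsVertex s (v.drop c) := by rw [IsVertex, hsplit]; rfl
        have hsh : height s = height t - c := by
          have := height_subtree_of_uniform ht hqs; omega
        have hsu : Uniform s := uniform_subtree ht hqs
        have hqlp : v.take c ∈ levelPaths c t := by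
          have := mem_levelPaths (v.take c) t (by rw [IsVertex, hqs]; rfl)
          rwa [hqlen] at this
        rcases le_or_gt (height t - c) k with hhk | hhk
        · obtain ⟨f', rfl⟩ : ∃ f', f = f' + 1 := ⟨f - 1, by omega⟩
          refine ⟨v.take c, height t - c, ?_, ⟨List.take_prefix _ _, by omega⟩, by omega, hhk⟩
          have := mem_decompAux_bot (ε := ε) hh2 hqlp hqs
            (root_mem_decompAux ε f' s)
          simpa [hsh] using this
        · obtain ⟨q', m', hmem, hdc, hb1, hb2⟩ :=
            ih s (v.drop c) k hsu hvs hk1 (by omega) (by omega)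
          refine ⟨v.take c ++ q', m', ?_, ?_, hb1, hb2⟩
          · exact mem_decompAux_bot hh2 hqlp hqs hmem
          · obtain ⟨hpre, hlen⟩ := hdc
            constructor
            · have : v.take c ++ q' <+: v.take c ++ v.drop c :=
                (List.prefix_append_right_inj _).mpr hpre
              rwa [List.take_append_drop] at this
            · have hdl : (v.drop c).length = v.length - c := by simp
              simp only [List.length_append]
              omega

/-- For every vertex `v` of `T` and every `k` with `1 ≤ k < height T`,
the highest vertex `R = (p, m)` of the decomposition `D` that contains `v` and has height
at most `k` has height at least `max ⌊ε(k+1)⌋ 1`. -/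
theorem highest_small_decomp_subtree_height
    (ε : ℝ) (hε0 : 0 < ε) (hε1 : ε ≤ 1/2) (t : OTree) (ht : Uniform t)
    (v : List ℕ) (hv : IsVertex t v)
    (k : ℕ) (hk1 : 1 ≤ k) (hk2 : k < height t)
    (p : List ℕ) (m : ℕ)
    (hR : (p, m) ∈ decompVerts ε t) (hcont : DContains p m v) (hm : m ≤ k)
    (hmax : ∀ q m', (q, m') ∈ decompVerts ε t → DContains q m' v → m' ≤ k → m' ≤ m) :
    max ⌊ε * ((k : ℝ) + 1)⌋₊ 1 ≤ m := by
  obtain ⟨q, m', hmem, hdc, hb1, hb2⟩ :=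
    exists_good ε hε0 hε1 (height t) t v k ht hv hk1 hk2 le_rfl
  exact le_trans hb1 (hmax q m' hmem hdc hb2)

end VEB
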